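/- If d = 2^m is the dimension of a circulant Hadamard matrix, then m = 0 or m = 2; that is, the only powers of 2 that can be the dimension of a circulant Hadamard matrix are 1 and 4. -/

import Mathlib

/-- `H` is circulant: `H i j = a (i - j)` for some `a : ZMod d → ℂ`,
indices read modulo `d`. -/
def IsCirculant {d : ℕ} (H : Matrix (Fin d) (Fin d) ℂ) : Prop :=
  ∃ a : ZMod d → ℂ, ∀ i j, H i j = a (((i : ℕ) : ZMod d) - ((j : ℕ) : ZMod d))

namespace TurynAux
open Finset Polynomial

variable {t : ℕ} {ζ : ℂ}


lemma pow_mod_eq {n : ℕ} (h1 : ζ ^ n = 1) (j : ℕ) :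
    ζ ^ (j % n) = ζ ^ j := by
  conv_rhs => rw [← Nat.mod_add_div j n]
  rw [pow_add, pow_mul, h1, one_pow, mul_one]

lemma indep (hζ : IsPrimitiveRoot ζ (2 * t)) (htot : (2 * t).totient = t)
    (q : ℕ → ℚ) (h : ∑ k ∈ Finset.range t, (q k : ℂ) * ζ ^ k = 0) : ∀ k < t, q k = 0 := by
  intro k0 hk0
  by_contra hq0
  have ht : 0 < t := by omega
  set P : Polynomial ℚ := ∑ k ∈ Finset.range t, Polynomial.C (q k) * Polynomial.X ^ k with hP
  have hcoeff : ∀ k, k < t → P.coeff k = q k := by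
    intro k hk
    rw [hP, Polynomial.finset_sum_coeff]
    rw [Finset.sum_congr rfl (fun i _ => by
      rw [Polynomial.coeff_C_mul, Polynomial.coeff_X_pow])]
    simp [Finset.sum_ite_eq, hk]
  have hroot : (Polynomial.aeval ζ) P = 0 := by
    rw [hP, map_sum]
    simp only [map_mul, Polynomial.aeval_C, map_pow, Polynomial.aeval_X]
    rw [← h]
    exact Finset.sum_congr rfl (fun k _ => by rw [eq_ratCast (algebraMap ℚ ℂ)])
  have hPne : P ≠ 0 := fun h0 => hq0 (by rw [← hcoeff k0 hk0, h0, Polynomial.coeff_zero])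
  have h1 := Polynomial.natDegree_le_of_dvd (minpoly.dvd ℚ ζ hroot) hPne
  have h2 : (minpoly ℚ ζ).natDegree = t := by
    rw [← Polynomial.cyclotomic_eq_minpoly_rat hζ (by omega), Polynomial.natDegree_cyclotomic, htot]
  have h3 : P.natDegree ≤ t - 1 := Polynomial.natDegree_sum_le_of_forall_le _ _ (fun i hi =>
    le_trans (Polynomial.natDegree_C_mul_X_pow_le _ _) (by simp only [Finset.mem_range] at hi; omega))
  omega

lemma mem_span_pow (ht : 1 ≤ t) (hhalf : ζ ^ t = -1) {x : ℂ}
    (hx : x ∈ Algebra.adjoin ℤ ({ζ} : Set ℂ)) :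
    ∃ d : ℕ → ℤ, x = ∑ k ∈ Finset.range t, (d k : ℂ) * ζ ^ k := by
  have hpow : ∀ j : ℕ, ζ ^ j ∈ Submodule.span ℤ (Set.range fun k : Fin t => ζ ^ (k : ℕ)) := by
    intro j
    induction j using Nat.strong_induction_on with
    | _ j ih =>
      rcases lt_or_ge j t with hj | hj
      · exact Submodule.subset_span ⟨⟨j, hj⟩, rfl⟩
      · have hje : ζ ^ j = -ζ ^ (j - t) := by
          have h' : ζ ^ j = ζ ^ (j - t) * ζ ^ t := by
            rw [← pow_add]; congr 1; omega
          rw [h', hhalf]; ring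
        rw [hje]
        exact Submodule.neg_mem _ (ih (j - t) (by omega))
  rw [Algebra.adjoin_singleton_eq_range_aeval] at hx
  obtain ⟨Q, hQ⟩ := hx
  have hQ' : (Polynomial.aeval ζ) Q = x := hQ
  have hxM : x ∈ Submodule.span ℤ (Set.range fun k : Fin t => ζ ^ (k : ℕ)) := by
    rw [← hQ', Polynomial.aeval_eq_sum_range]
    exact Submodule.sum_mem _ fun i _ => Submodule.smul_mem _ _ (hpow i)
  rw [Submodule.mem_span_range_iff_exists_fun] at hxM
  obtain ⟨c, hc⟩ := hxM
  refine ⟨fun k => if hk : k < t then c ⟨k, hk⟩ else 0, ?_⟩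
  rw [← hc]
  rw [← Fin.sum_univ_eq_sum_range (fun k => ((if hk : k < t then c ⟨k, hk⟩ else 0 : ℤ) : ℂ) * ζ ^ k) t]
  exact Finset.sum_congr rfl (fun i _ => by
    rw [dif_pos i.isLt]
    simp [zsmul_eq_mul])

lemma coeff_eq (hζ : IsPrimitiveRoot ζ (2 * t)) (htot : (2 * t).totient = t)
    {d e : ℕ → ℤ}
    (h : ∑ k ∈ Finset.range t, (d k : ℂ) * ζ ^ k = ∑ k ∈ Finset.range t, (e k : ℂ) * ζ ^ k) :
    ∀ k < t, d k = e k := by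
  have h0 : ∑ k ∈ Finset.range t, (((fun k => ((d k : ℚ) - (e k : ℚ))) k : ℚ) : ℂ) * ζ ^ k = 0 := by
    have : ∑ k ∈ Finset.range t, ((d k : ℂ) * ζ ^ k - (e k : ℂ) * ζ ^ k) = 0 := by
      rw [Finset.sum_sub_distrib, h, sub_self]
    rw [← this]
    exact Finset.sum_congr rfl (fun k _ => by push_cast; ring)
  intro k hk
  have := indep hζ htot _ h0 k hk
  have : (d k : ℚ) = e k := by linarith [this]
  exact_mod_cast this

lemma one_sub_pow_assoc {n : ℕ} (hn : 2 ≤ n) (hζ : IsPrimitiveRoot ζ n) {i : ℕ}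
    (hi : Nat.Coprime i n) :
    ∃ u v : ℂ, u ∈ Algebra.adjoin ℤ ({ζ} : Set ℂ) ∧ v ∈ Algebra.adjoin ℤ ({ζ} : Set ℂ) ∧ u * v = 1 ∧ 1 - ζ ^ i = u * (1 - ζ) := by
  have hζR : ζ ∈ Algebra.adjoin ℤ ({ζ} : Set ℂ) := Algebra.subset_adjoin rfl
  have h1 : ζ ^ n = 1 := hζ.pow_eq_one
  have hne : (1 : ℂ) - ζ ≠ 0 := sub_ne_zero.mpr (Ne.symm (hζ.ne_one hn))
  obtain ⟨j, -, hj⟩ := Nat.exists_mul_mod_eq_one_of_coprime hi (by omega)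
  have hgu : 1 - ζ ^ i = (∑ k ∈ Finset.range i, ζ ^ k) * (1 - ζ) := by
    linear_combination geom_sum_mul ζ i
  have hz : (ζ ^ i) ^ j = ζ := by
    rw [← pow_mul, ← pow_mod_eq h1 (i * j), hj, pow_one]
  have hgv : 1 - ζ = (∑ k ∈ Finset.range j, (ζ ^ i) ^ k) * (1 - ζ ^ i) := by
    have hg := geom_sum_mul (ζ ^ i) j
    rw [hz] at hg
    linear_combination hg
  refine ⟨∑ k ∈ Finset.range i, ζ ^ k, ∑ k ∈ Finset.range j, (ζ ^ i) ^ k,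
    Subalgebra.sum_mem _ fun k _ => Subalgebra.pow_mem _ hζR k,
    Subalgebra.sum_mem _ fun k _ => Subalgebra.pow_mem _ (Subalgebra.pow_mem _ hζR i) k,
    ?_, hgu⟩
  have hx : ((∑ k ∈ Finset.range i, ζ ^ k) * (∑ k ∈ Finset.range j, (ζ ^ i) ^ k)) * (1 - ζ)
      = 1 * (1 - ζ) := by
    calc ((∑ k ∈ Finset.range i, ζ ^ k) * (∑ k ∈ Finset.range j, (ζ ^ i) ^ k)) * (1 - ζ)
        = (∑ k ∈ Finset.range j, (ζ ^ i) ^ k) * ((∑ k ∈ Finset.range i, ζ ^ k) * (1 - ζ)) := by ring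
      _ = (∑ k ∈ Finset.range j, (ζ ^ i) ^ k) * (1 - ζ ^ i) := by rw [← hgu]
      _ = 1 - ζ := by rw [← hgv]
      _ = 1 * (1 - ζ) := by rw [one_mul]
  exact mul_right_cancel₀ hne hx

lemma two_assoc {m : ℕ} (hm : 1 ≤ m) (hζ : IsPrimitiveRoot ζ (2 ^ m)) :
    ∃ u v : ℂ, u ∈ Algebra.adjoin ℤ ({ζ} : Set ℂ) ∧ v ∈ Algebra.adjoin ℤ ({ζ} : Set ℂ) ∧ u * v = 1 ∧ (2 : ℂ) = u * (1 - ζ) ^ (2 ^ (m - 1)) := by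
  have hn2 : 2 ≤ 2 ^ m := by
    calc 2 = 2 ^ 1 := (pow_one 2).symm
    _ ≤ 2 ^ m := Nat.pow_le_pow_right (by norm_num) hm
  haveI : NeZero (2 ^ m) := ⟨by positivity⟩
  have h2eq : (2 : ℂ) = ∏ μ ∈ primitiveRoots (2 ^ m) ℂ, (1 - μ) := by
    have hc := Polynomial.cyclotomic_eq_prod_X_sub_primitiveRoots hζ
    have he : Polynomial.eval 1 (Polynomial.cyclotomic (2 ^ m) ℂ) = 2 := by
      have hmm : m = (m - 1) + 1 := by omega
      rw [hmm, Polynomial.eval_one_cyclotomic_prime_pow]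
      norm_num
    rw [hc, Polynomial.eval_prod] at he
    simp only [Polynomial.eval_sub, Polynomial.eval_one, Polynomial.eval_X,
      Polynomial.eval_C] at he
    exact he.symm
  have key : ∀ μ ∈ primitiveRoots (2 ^ m) ℂ, ∃ pr : ℂ × ℂ,
      pr.1 ∈ Algebra.adjoin ℤ ({ζ} : Set ℂ) ∧ pr.2 ∈ Algebra.adjoin ℤ ({ζ} : Set ℂ) ∧ pr.1 * pr.2 = 1 ∧ 1 - μ = pr.1 * (1 - ζ) := by
    intro μ hμ
    rw [mem_primitiveRoots (by positivity)] at hμ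
    obtain ⟨i, hi, rfl⟩ := hζ.eq_pow_of_pow_eq_one hμ.pow_eq_one
    have hcop : Nat.Coprime i (2 ^ m) := (hζ.pow_iff_coprime (by positivity) i).mp hμ
    obtain ⟨u, v, h1, h2, h3, h4⟩ := one_sub_pow_assoc hn2 hζ hcop
    exact ⟨(u, v), h1, h2, h3, h4⟩
  choose! F hF1 hF2 hF3 hF4 using key
  refine ⟨∏ μ ∈ primitiveRoots (2 ^ m) ℂ, (F μ).1, ∏ μ ∈ primitiveRoots (2 ^ m) ℂ, (F μ).2,
    Subalgebra.prod_mem _ (fun μ hμ => hF1 μ hμ), Subalgebra.prod_mem _ (fun μ hμ => hF2 μ hμ),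
    ?_, ?_⟩
  · rw [← Finset.prod_mul_distrib, Finset.prod_congr rfl (fun μ hμ => hF3 μ hμ),
      Finset.prod_const_one]
  · rw [h2eq, Finset.prod_congr rfl (fun μ hμ => hF4 μ hμ), Finset.prod_mul_distrib,
      Finset.prod_const, hζ.card_primitiveRoots, Nat.totient_prime_pow Nat.prime_two (by omega)]
    norm_num

lemma zmod_sum {n : ℕ} [NeZero n] {β : Type} [AddCommMonoid β] (f : ZMod n → β) :
    ∑ x : ZMod n, f x = ∑ k ∈ Finset.range n, f ((k : ℕ) : ZMod n) := by
  rw [← Fin.sum_univ_eq_sum_range (fun k => f ((k : ℕ) : ZMod n)) n]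
  exact (Fintype.sum_bijective (fun k : Fin n => ((k : ℕ) : ZMod n))
    (by
      rw [Fintype.bijective_iff_surjective_and_card]
      exact ⟨fun x => ⟨⟨x.val, x.val_lt⟩, ZMod.natCast_rightInverse x⟩, by simp [ZMod.card]⟩)
    _ _ (fun k => rfl)).symm

lemma cast_bijective {n : ℕ} [NeZero n] :
    Function.Bijective (fun k : Fin n => ((k : ℕ) : ZMod n)) := by
  rw [Fintype.bijective_iff_surjective_and_card]
  exact ⟨fun x => ⟨⟨x.val, x.val_lt⟩, ZMod.natCast_rightInverse x⟩, by simp [ZMod.card]⟩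


theorem core (p : ℕ) (hp : 2 ≤ p) {ζ : ℂ} (hζ : IsPrimitiveRoot ζ (2 ^ (2 * p)))
    (b : ZMod (2 ^ (2 * p)) → ℤ) (hb : ∀ x, b x = 1 ∨ b x = -1)
    (hauto : ∀ d : ZMod (2 ^ (2 * p)),
      (∑ x : ZMod (2 ^ (2 * p)), (b x : ℂ) * ((b (x + d) : ℤ) : ℂ)) =
        if d = 0 then ((2 ^ (2 * p) : ℕ) : ℂ) else 0) : False := by
  classical
  haveI : NeZero (2 ^ (2 * p)) := ⟨by positivity⟩
  have hnpos : 0 < 2 ^ (2 * p) := by positivity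
  obtain ⟨t, htdef⟩ : ∃ t, t = 2 ^ (2 * p - 1) := ⟨_, rfl⟩
  have hnt : 2 ^ (2 * p) = 2 * t := by
    rw [htdef, ← pow_succ']
    congr 1
    omega
  have ht2 : 2 ≤ t := by
    rw [htdef]
    calc 2 = 2 ^ 1 := (pow_one 2).symm
    _ ≤ _ := Nat.pow_le_pow_right (by norm_num) (by omega)
  have hζ2 : IsPrimitiveRoot ζ (2 * t) := hnt ▸ hζ
  have htot : (2 * t).totient = t := by
    rw [← hnt, Nat.totient_prime_pow Nat.prime_two (by omega), htdef]
    simp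
  have h1 : ζ ^ (2 ^ (2 * p)) = 1 := hζ.pow_eq_one
  have hhalf : ζ ^ t = -1 := by
    have hsq : (ζ ^ t) ^ 2 = 1 := by
      rw [← pow_mul, show t * 2 = 2 * t from by ring]
      exact hζ2.pow_eq_one
    have hne1 : ζ ^ t ≠ 1 := hζ2.pow_ne_one_of_pos_of_lt (by omega) (by omega)
    have h0 : (ζ ^ t - 1) * (ζ ^ t + 1) = 0 := by linear_combination hsq
    rcases mul_eq_zero.mp h0 with h | h
    · exact absurd (sub_eq_zero.mp h) hne1
    · exact eq_neg_of_add_eq_zero_left h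
  have hζnorm : ‖ζ‖ = 1 := Complex.norm_eq_one_of_pow_eq_one h1 (by positivity)
  have hEinv : ∀ x : ZMod (2 ^ (2 * p)), ζ ^ x.val * ζ ^ (-x).val = 1 := by
    intro x
    rw [← pow_add, ← pow_mod_eq h1 (x.val + (-x).val), ← ZMod.val_add]
    simp
  have hconjE : ∀ x : ZMod (2 ^ (2 * p)), (starRingEnd ℂ) (ζ ^ x.val) = ζ ^ (-x).val := by
    intro x
    rw [← Complex.inv_eq_conj (by rw [norm_pow, hζnorm, one_pow])]
    exact inv_eq_of_mul_eq_one_right (hEinv x)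
  have hEmul : ∀ x y : ZMod (2 ^ (2 * p)), ζ ^ (x + y).val = ζ ^ x.val * ζ ^ y.val := by
    intro x y
    rw [ZMod.val_add, pow_mod_eq h1, pow_add]
  set γ : ℂ := ∑ x : ZMod (2 ^ (2 * p)), (b x : ℂ) * ζ ^ x.val with hγdef
  have hmain : γ * (starRingEnd ℂ) γ = ((2 ^ (2 * p) : ℕ) : ℂ) := by
    have hcγ : (starRingEnd ℂ) γ = ∑ y : ZMod (2 ^ (2 * p)), (b y : ℂ) * ζ ^ (-y).val := by
      rw [hγdef, map_sum]
      exact Finset.sum_congr rfl fun y _ => by rw [map_mul, hconjE y, map_intCast]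
    rw [hcγ, hγdef, Finset.sum_mul_sum, Finset.sum_comm]
    have hinner : ∀ y : ZMod (2 ^ (2 * p)),
        (∑ x : ZMod (2 ^ (2 * p)), ((b x : ℂ) * ζ ^ x.val) * ((b y : ℂ) * ζ ^ (-y).val))
        = ∑ d : ZMod (2 ^ (2 * p)), ((b y : ℂ) * ((b (y + d) : ℤ) : ℂ)) * ζ ^ d.val := by
      intro y
      refine (Fintype.sum_bijective (fun d : ZMod (2 ^ (2 * p)) => y + d)
        (Equiv.addLeft y).bijective _ _ (fun d => ?_)).symm
      have hzz : ζ ^ (y + d).val * ζ ^ (-y).val = ζ ^ d.val := by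
        rw [← hEmul]
        congr 1
        rw [show y + d + -y = d from by ring]
      calc ((b y : ℂ) * ((b (y + d) : ℤ) : ℂ)) * ζ ^ d.val
          = ((b y : ℂ) * ((b (y + d) : ℤ) : ℂ)) * (ζ ^ (y + d).val * ζ ^ (-y).val) := by
            rw [hzz]
        _ = ((b (y + d) : ℂ) * ζ ^ (y + d).val) * ((b y : ℂ) * ζ ^ (-y).val) := by ring
    rw [Finset.sum_congr rfl (fun y _ => hinner y), Finset.sum_comm]
    have hrow : ∀ d : ZMod (2 ^ (2 * p)),
        (∑ y : ZMod (2 ^ (2 * p)), ((b y : ℂ) * ((b (y + d) : ℤ) : ℂ)) * ζ ^ d.val)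
        = (if d = 0 then ((2 ^ (2 * p) : ℕ) : ℂ) else 0) * ζ ^ d.val := by
      intro d
      rw [← Finset.sum_mul, hauto d]
    rw [Finset.sum_congr rfl (fun d _ => hrow d),
      Finset.sum_congr rfl (fun d _ => by rw [ite_mul, zero_mul]),
      Finset.sum_ite_eq' Finset.univ (0 : ZMod (2 ^ (2 * p)))
        (fun d => ((2 ^ (2 * p) : ℕ) : ℂ) * ζ ^ d.val)]
    simp
  have hζR : ζ ∈ Algebra.adjoin ℤ ({ζ} : Set ℂ) := Algebra.subset_adjoin rfl
  have hint : ∀ k : ℤ, ((k : ℂ)) ∈ Algebra.adjoin ℤ ({ζ} : Set ℂ) := fun k => by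
    simpa using Subalgebra.algebraMap_mem (Algebra.adjoin ℤ ({ζ} : Set ℂ)) k
  have hγR : γ ∈ Algebra.adjoin ℤ ({ζ} : Set ℂ) := by
    rw [hγdef]
    exact Subalgebra.sum_mem _ fun x _ =>
      Subalgebra.mul_mem _ (hint _) (Subalgebra.pow_mem _ hζR _)
  obtain ⟨u, v, huR, hvR, huv, h2⟩ := two_assoc (m := 2 * p) (by omega) hζ
  rw [← htdef] at h2
  have hπR : (1 : ℂ) - ζ ∈ Algebra.adjoin ℤ ({ζ} : Set ℂ) :=
    Subalgebra.sub_mem _ (Subalgebra.one_mem _) hζR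
  have hπne : (1 : ℂ) - ζ ≠ 0 := sub_ne_zero.mpr (Ne.symm (hζ2.ne_one (by omega)))
  have hζc : (starRingEnd ℂ) ζ = ζ ^ (2 ^ (2 * p) - 1) := by
    have hm1 : ζ * ζ ^ (2 ^ (2 * p) - 1) = 1 := by
      rw [← pow_succ', show 2 ^ (2 * p) - 1 + 1 = 2 ^ (2 * p) from by omega]
      exact h1
    rw [← Complex.inv_eq_conj hζnorm]
    exact inv_eq_of_mul_eq_one_right hm1
  have hconjR : ∀ x ∈ Algebra.adjoin ℤ ({ζ} : Set ℂ),
      (starRingEnd ℂ) x ∈ Algebra.adjoin ℤ ({ζ} : Set ℂ) := by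
    intro x hx
    refine Algebra.adjoin_induction ?_ ?_ ?_ ?_ hx
    · intro z hz
      rw [Set.mem_singleton_iff] at hz
      subst hz
      rw [hζc]
      exact Subalgebra.pow_mem _ hζR _
    · intro r
      have hr : (starRingEnd ℂ) ((algebraMap ℤ ℂ) r) = ((r : ℂ)) := by
        simp
      rw [hr]
      exact hint r
    · intro x y _ _ ihx ihy
      rw [map_add]
      exact Subalgebra.add_mem _ ihx ihy
    · intro x y _ _ ihx ihy
      rw [map_mul]
      exact Subalgebra.mul_mem _ ihx ihy
  have hcop : Nat.Coprime (2 ^ (2 * p) - 1) (2 ^ (2 * p)) := by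
    obtain ⟨j, hj⟩ : ∃ j, 2 ^ (2 * p) - 1 = j := ⟨_, rfl⟩
    have hj2 : 2 ^ (2 * p) = j + 1 := by omega
    rw [hj, hj2]
    show Nat.gcd j (j + 1) = 1
    rw [Nat.gcd_self_add_right]
    exact Nat.gcd_one_right j
  obtain ⟨τ, σ, hτR, hσR, hτσ, hτ⟩ :=
    one_sub_pow_assoc (n := 2 ^ (2 * p)) (by omega) hζ hcop
  have hconjπ : (starRingEnd ℂ) (1 - ζ) = τ * (1 - ζ) := by
    rw [map_sub, map_one, hζc]
    exact hτ
  have htrans : ∀ (k : ℕ) (x : ℂ),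
      (∃ c ∈ Algebra.adjoin ℤ ({ζ} : Set ℂ), x = (1 - ζ) ^ k * c) →
      ∃ c ∈ Algebra.adjoin ℤ ({ζ} : Set ℂ), (starRingEnd ℂ) x = (1 - ζ) ^ k * c := by
    rintro k x ⟨c, hcR, rfl⟩
    refine ⟨τ ^ k * (starRingEnd ℂ) c,
      Subalgebra.mul_mem _ (Subalgebra.pow_mem _ hτR k) (hconjR c hcR), ?_⟩
    rw [map_mul, map_pow, hconjπ, mul_pow]
    ring
  have hL0 : ∀ w ∈ Algebra.adjoin ℤ ({ζ} : Set ℂ), (2 : ℂ) * w ≠ 1 := by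
    intro w hwR hw
    obtain ⟨d, hd⟩ := mem_span_pow (by omega) hhalf hwR
    have hA : ∑ k ∈ Finset.range t, ((2 * d k : ℤ) : ℂ) * ζ ^ k = (2 : ℂ) * w := by
      rw [hd, Finset.mul_sum]
      exact Finset.sum_congr rfl fun k _ => by push_cast; ring
    have hB : ∑ k ∈ Finset.range t, ((if k = 0 then (1 : ℤ) else 0 : ℤ) : ℂ) * ζ ^ k = 1 := by
      rw [Finset.sum_congr rfl (fun k _ => by
        rw [apply_ite (fun z : ℤ => (z : ℂ)), ite_mul] )]
      simp only [Int.cast_one, Int.cast_zero, one_mul, zero_mul]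
      rw [Finset.sum_ite_eq' (Finset.range t) 0 (fun k => ζ ^ k)]
      simp [Finset.mem_range, (by omega : 0 < t)]
    have h2w : ∑ k ∈ Finset.range t, ((2 * d k : ℤ) : ℂ) * ζ ^ k
        = ∑ k ∈ Finset.range t, ((if k = 0 then (1 : ℤ) else 0 : ℤ) : ℂ) * ζ ^ k := by
      rw [hA, hB, hw]
    have := coeff_eq hζ2 htot h2w 0 (by omega)
    simp at this
    omega
  have h2c : ∃ c ∈ Algebra.adjoin ℤ ({ζ} : Set ℂ), (2 : ℂ) = (1 - ζ) * c := by
    refine ⟨u * (1 - ζ) ^ (t - 1),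
      Subalgebra.mul_mem _ huR (Subalgebra.pow_mem _ hπR _), ?_⟩
    rw [h2]
    have hpw : (1 - ζ) ^ t = (1 - ζ) * (1 - ζ) ^ (t - 1) := by
      rw [← pow_succ']
      congr 1
      omega
    rw [hpw]
    ring
  obtain ⟨c₂, hc₂R, hc₂⟩ := h2c
  have hmod2 : ∀ x ∈ Algebra.adjoin ℤ ({ζ} : Set ℂ),
      (∃ c ∈ Algebra.adjoin ℤ ({ζ} : Set ℂ), x = (1 - ζ) * c) ∨
      (∃ c ∈ Algebra.adjoin ℤ ({ζ} : Set ℂ), x = 1 + (1 - ζ) * c) := by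
    intro x hx
    refine Algebra.adjoin_induction ?_ ?_ ?_ ?_ hx
    · intro z hz
      rw [Set.mem_singleton_iff] at hz
      subst hz
      right
      exact ⟨-1, Subalgebra.neg_mem _ (Subalgebra.one_mem _), by ring⟩
    · intro r
      have hr : (algebraMap ℤ ℂ) r = ((r : ℂ)) := by
        simpa using map_intCast (algebraMap ℤ ℂ) r
      rcases Int.even_or_odd r with ⟨q, hq⟩ | ⟨q, hq⟩
      · left
        refine ⟨c₂ * q, Subalgebra.mul_mem _ hc₂R (hint q), ?_⟩
        rw [hr, hq]
        push_cast
        linear_combination (q : ℂ) * hc₂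
      · right
        refine ⟨c₂ * q, Subalgebra.mul_mem _ hc₂R (hint q), ?_⟩
        rw [hr, hq]
        push_cast
        linear_combination (q : ℂ) * hc₂
    · rintro x y hxR hyR (⟨c, hcR, rfl⟩ | ⟨c, hcR, rfl⟩) (⟨e, heR, rfl⟩ | ⟨e, heR, rfl⟩)
      · exact Or.inl ⟨c + e, Subalgebra.add_mem _ hcR heR, by ring⟩
      · exact Or.inr ⟨c + e, Subalgebra.add_mem _ hcR heR, by ring⟩
      · exact Or.inr ⟨c + e, Subalgebra.add_mem _ hcR heR, by ring⟩
      · refine Or.inl ⟨c₂ + (c + e),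
          Subalgebra.add_mem _ hc₂R (Subalgebra.add_mem _ hcR heR), ?_⟩
        linear_combination hc₂
    · rintro x y hxR hyR (⟨c, hcR, rfl⟩ | ⟨c, hcR, rfl⟩) ihy
      · exact Or.inl ⟨c * y, Subalgebra.mul_mem _ hcR hyR, by ring⟩
      · rcases ihy with ⟨e, heR, rfl⟩ | ⟨e, heR, rfl⟩
        · exact Or.inl ⟨(1 + (1 - ζ) * c) * e, Subalgebra.mul_mem _ hxR heR, by ring⟩
        · exact Or.inr ⟨c + e + (1 - ζ) * (c * e), Subalgebra.add_mem _
            (Subalgebra.add_mem _ hcR heR)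
            (Subalgebra.mul_mem _ hπR (Subalgebra.mul_mem _ hcR heR)), by ring⟩
  have hnotunit : ∀ w ∈ Algebra.adjoin ℤ ({ζ} : Set ℂ), (1 - ζ) * w ≠ 1 := by
    intro w hwR hw
    apply hL0 (w ^ t * v) (Subalgebra.mul_mem _ (Subalgebra.pow_mem _ hwR t) hvR)
    calc (2 : ℂ) * (w ^ t * v) = (u * v) * ((1 - ζ) ^ t * w ^ t) := by rw [h2]; ring
      _ = (u * v) * ((1 - ζ) * w) ^ t := by rw [mul_pow]
      _ = 1 := by rw [huv, hw, one_pow, one_mul]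
  have hprime : ∀ x ∈ Algebra.adjoin ℤ ({ζ} : Set ℂ),
      ∀ y ∈ Algebra.adjoin ℤ ({ζ} : Set ℂ),
      (∃ c ∈ Algebra.adjoin ℤ ({ζ} : Set ℂ), x * y = (1 - ζ) * c) →
      (∃ c ∈ Algebra.adjoin ℤ ({ζ} : Set ℂ), x = (1 - ζ) * c) ∨
      (∃ c ∈ Algebra.adjoin ℤ ({ζ} : Set ℂ), y = (1 - ζ) * c) := by
    rintro x hxR y hyR ⟨c, hcR, hc⟩
    rcases hmod2 x hxR with hx1 | ⟨e, heR, rfl⟩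
    · exact Or.inl hx1
    rcases hmod2 y hyR with hy1 | ⟨f, hfR, rfl⟩
    · exact Or.inr hy1
    exfalso
    apply hnotunit (c - (e + f + (1 - ζ) * e * f))
      (Subalgebra.sub_mem _ hcR (Subalgebra.add_mem _ (Subalgebra.add_mem _ heR hfR)
        (Subalgebra.mul_mem _ (Subalgebra.mul_mem _ hπR heR) hfR)))
    linear_combination (-1 : ℂ) * hc
  have hγγ : γ * (starRingEnd ℂ) γ = u ^ (2 * p) * (1 - ζ) ^ (2 * (p * t)) := by
    rw [hmain]
    calc ((2 ^ (2 * p) : ℕ) : ℂ) = ((2 : ℂ)) ^ (2 * p) := by push_cast; ring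
      _ = (u * (1 - ζ) ^ t) ^ (2 * p) := by rw [← h2]
      _ = u ^ (2 * p) * (1 - ζ) ^ (2 * (p * t)) := by
          rw [mul_pow, ← pow_mul, show t * (2 * p) = 2 * (p * t) from by ring]
  have hconjγR : (starRingEnd ℂ) γ ∈ Algebra.adjoin ℤ ({ζ} : Set ℂ) := hconjR γ hγR
  have hbound : ∀ k : ℕ,
      (∃ c ∈ Algebra.adjoin ℤ ({ζ} : Set ℂ), γ = (1 - ζ) ^ k * c) → k ≤ 2 * (p * t) := by
    rintro k ⟨c, hcR, hc⟩
    by_contra hk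
    push_neg at hk
    have hpw : (1 - ζ) ^ (2 * (p * t)) * ((1 - ζ) * (1 - ζ) ^ (k - (2 * (p * t) + 1)))
        = (1 - ζ) ^ k := by
      rw [← pow_succ', ← pow_add]
      congr 1
      omega
    have hstep : (1 - ζ) ^ (2 * (p * t)) *
        ((1 - ζ) * ((1 - ζ) ^ (k - (2 * (p * t) + 1)) * c * (starRingEnd ℂ) γ))
        = (1 - ζ) ^ (2 * (p * t)) * u ^ (2 * p) := by
      calc (1 - ζ) ^ (2 * (p * t)) *
          ((1 - ζ) * ((1 - ζ) ^ (k - (2 * (p * t) + 1)) * c * (starRingEnd ℂ) γ))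
          = ((1 - ζ) ^ (2 * (p * t)) * ((1 - ζ) * (1 - ζ) ^ (k - (2 * (p * t) + 1))))
            * (c * (starRingEnd ℂ) γ) := by ring
        _ = (1 - ζ) ^ k * (c * (starRingEnd ℂ) γ) := by rw [hpw]
        _ = γ * (starRingEnd ℂ) γ := by rw [hc]; ring
        _ = u ^ (2 * p) * (1 - ζ) ^ (2 * (p * t)) := hγγ
        _ = (1 - ζ) ^ (2 * (p * t)) * u ^ (2 * p) := by ring
    have hcancel := mul_left_cancel₀ (pow_ne_zero (2 * (p * t)) hπne) hstep
    apply hnotunit ((1 - ζ) ^ (k - (2 * (p * t) + 1)) * c * (starRingEnd ℂ) γ * v ^ (2 * p))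
      (Subalgebra.mul_mem _ (Subalgebra.mul_mem _ (Subalgebra.mul_mem _
        (Subalgebra.pow_mem _ hπR _) hcR) hconjγR) (Subalgebra.pow_mem _ hvR _))
    calc (1 - ζ) * ((1 - ζ) ^ (k - (2 * (p * t) + 1)) * c * (starRingEnd ℂ) γ * v ^ (2 * p))
        = ((1 - ζ) * ((1 - ζ) ^ (k - (2 * (p * t) + 1)) * c * (starRingEnd ℂ) γ)) * v ^ (2 * p) := by
          ring
      _ = u ^ (2 * p) * v ^ (2 * p) := by rw [hcancel]
      _ = 1 := by rw [← mul_pow, huv, one_pow]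
  obtain ⟨a, hadef⟩ : ∃ a, a = Nat.findGreatest
      (fun k => ∃ c ∈ Algebra.adjoin ℤ ({ζ} : Set ℂ), γ = (1 - ζ) ^ k * c) (2 * (p * t)) :=
    ⟨_, rfl⟩
  have hP0 : ∃ c ∈ Algebra.adjoin ℤ ({ζ} : Set ℂ), γ = (1 - ζ) ^ 0 * c :=
    ⟨γ, hγR, by rw [pow_zero, one_mul]⟩
  have hPa : ∃ c ∈ Algebra.adjoin ℤ ({ζ} : Set ℂ), γ = (1 - ζ) ^ a * c := by
    rw [hadef]
    exact Nat.findGreatest_spec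
      (P := fun k => ∃ c ∈ Algebra.adjoin ℤ ({ζ} : Set ℂ), γ = (1 - ζ) ^ k * c)
      (Nat.zero_le _) hP0
  have hale : a ≤ 2 * (p * t) := by
    rw [hadef]
    exact Nat.findGreatest_le _
  have hnotPa1 : ¬ ∃ c ∈ Algebra.adjoin ℤ ({ζ} : Set ℂ), γ = (1 - ζ) ^ (a + 1) * c := by
    intro hP
    rcases le_or_gt (a + 1) (2 * (p * t)) with h | h
    · have hlt : Nat.findGreatest
          (fun k => ∃ c ∈ Algebra.adjoin ℤ ({ζ} : Set ℂ), γ = (1 - ζ) ^ k * c) (2 * (p * t))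
          < a + 1 := by
        rw [← hadef]
        omega
      exact Nat.findGreatest_is_greatest hlt h hP
    · exact absurd (hbound _ hP) (by omega)
  have hPac : ∃ c ∈ Algebra.adjoin ℤ ({ζ} : Set ℂ),
      (starRingEnd ℂ) γ = (1 - ζ) ^ a * c := htrans a γ hPa
  have hnotPac1 : ¬ ∃ c ∈ Algebra.adjoin ℤ ({ζ} : Set ℂ),
      (starRingEnd ℂ) γ = (1 - ζ) ^ (a + 1) * c := by
    intro hP
    apply hnotPa1
    have := htrans (a + 1) ((starRingEnd ℂ) γ) hP
    rwa [Complex.conj_conj] at this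
  have haN : 2 * t ≤ a := by
    have h2p : 2 * t ≤ p * t := Nat.mul_le_mul_right t hp
    have haN' : p * t ≤ a := by
      by_contra hlt
      push_neg at hlt
      obtain ⟨g, hgR, hg⟩ := hPa
      obtain ⟨gc, hgcR, hgc⟩ := hPac
      have e1 : (1 - ζ) ^ (2 * a) * (g * gc) = γ * (starRingEnd ℂ) γ := by
        rw [hgc, hg, two_mul, pow_add]
        ring
      have e2 : (1 - ζ) ^ (2 * a) * ((1 - ζ) ^ (2 * (p * t) - 2 * a) * u ^ (2 * p))
          = (1 - ζ) ^ (2 * (p * t)) * u ^ (2 * p) := by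
        rw [← mul_assoc, ← pow_add,
          show 2 * a + (2 * (p * t) - 2 * a) = 2 * (p * t) from by omega]
      have hgh : (1 - ζ) ^ (2 * a) * (g * gc)
          = (1 - ζ) ^ (2 * a) * ((1 - ζ) ^ (2 * (p * t) - 2 * a) * u ^ (2 * p)) := by
        rw [e1, e2, hγγ]
        ring
      have hgh2 := mul_left_cancel₀ (pow_ne_zero (2 * a) hπne) hgh
      have hq2 : 2 ≤ 2 * (p * t) - 2 * a := by omega
      have hpw2 : (1 - ζ) ^ (2 * (p * t) - 2 * a)
          = (1 - ζ) * (1 - ζ) ^ (2 * (p * t) - 2 * a - 1) := by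
        rw [← pow_succ']
        congr 1
        omega
      have hdvd : ∃ c ∈ Algebra.adjoin ℤ ({ζ} : Set ℂ), g * gc = (1 - ζ) * c := by
        refine ⟨(1 - ζ) ^ (2 * (p * t) - 2 * a - 1) * u ^ (2 * p),
          Subalgebra.mul_mem _ (Subalgebra.pow_mem _ hπR _) (Subalgebra.pow_mem _ huR _), ?_⟩
        rw [hgh2, hpw2]
        ring
      rcases hprime g hgR gc hgcR hdvd with ⟨c, hcR, hc⟩ | ⟨c, hcR, hc⟩
      · exact hnotPa1 ⟨c, hcR, by rw [hg, hc, pow_succ]; ring⟩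
      · exact hnotPac1 ⟨c, hcR, by rw [hgc, hc, pow_succ]; ring⟩
    omega
  obtain ⟨g, hgR, hg⟩ := hPa
  have hπt : (1 - ζ) ^ t = 2 * v := by
    linear_combination (-v : ℂ) * h2 + (-(1 - ζ) ^ t) * huv
  have hγ4 : γ = 4 * (v ^ 2 * ((1 - ζ) ^ (a - 2 * t) * g)) := by
    have hsplit : (1 - ζ) ^ a = (1 - ζ) ^ (2 * t) * (1 - ζ) ^ (a - 2 * t) := by
      rw [← pow_add]
      congr 1
      omega
    have hsq4 : (1 - ζ) ^ (2 * t) = 4 * v ^ 2 := by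
      rw [two_mul, pow_add, hπt]
      ring
    rw [hg, hsplit, hsq4]
    ring
  obtain ⟨d, hd⟩ := mem_span_pow (by omega : 1 ≤ t) hhalf
    (Subalgebra.mul_mem _ (Subalgebra.pow_mem _ hvR 2)
      (Subalgebra.mul_mem _ (Subalgebra.pow_mem _ hπR _) hgR))
  have h4d : γ = ∑ k ∈ Finset.range t, ((4 * d k : ℤ) : ℂ) * ζ ^ k := by
    rw [hγ4, hd, Finset.mul_sum]
    exact Finset.sum_congr rfl fun k _ => by push_cast; ring
  have hγsum : γ = ∑ k ∈ Finset.range t,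
      ((b ((k : ℕ) : ZMod (2 ^ (2 * p))) - b (((t + k : ℕ)) : ZMod (2 ^ (2 * p))) : ℤ) : ℂ)
        * ζ ^ k := by
    rw [hγdef, zmod_sum (fun x : ZMod (2 ^ (2 * p)) => (b x : ℂ) * ζ ^ x.val)]
    have hcast : ∑ k ∈ Finset.range (2 ^ (2 * p)), (b ((k : ℕ) : ZMod (2 ^ (2 * p))) : ℂ)
          * ζ ^ (((k : ℕ) : ZMod (2 ^ (2 * p))).val)
        = ∑ k ∈ Finset.range (2 ^ (2 * p)), (b ((k : ℕ) : ZMod (2 ^ (2 * p))) : ℂ) * ζ ^ k :=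
      Finset.sum_congr rfl (fun k hk => by
        rw [ZMod.val_cast_of_lt (Finset.mem_range.mp hk)])
    rw [hcast]
    rw [show Finset.range (2 ^ (2 * p)) = Finset.range (t + t) from by rw [hnt, two_mul]]
    rw [Finset.range_eq_Ico,
      ← Finset.sum_Ico_consecutive _ (Nat.zero_le t) (by omega : t ≤ t + t)]
    have hIco : (∑ i ∈ Finset.Ico t (t + t), (b ((i : ℕ) : ZMod (2 ^ (2 * p))) : ℂ) * ζ ^ i)
        = ∑ k ∈ Finset.range t, (b (((t + k : ℕ)) : ZMod (2 ^ (2 * p))) : ℂ) * ζ ^ (t + k) := by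
      rw [Finset.sum_Ico_eq_sum_range, show t + t - t = t from by omega]
    rw [hIco, ← Finset.range_eq_Ico, ← Finset.sum_add_distrib]
    refine Finset.sum_congr rfl fun k hk => ?_
    rw [pow_add, hhalf]
    push_cast
    ring
  have hγ0 : γ = 0 := by
    rw [hγsum]
    apply Finset.sum_eq_zero
    intro k hk
    have hkt := Finset.mem_range.mp hk
    have h4 := coeff_eq hζ2 htot (hγsum.symm.trans h4d) k hkt
    rcases hb ((k : ℕ) : ZMod (2 ^ (2 * p))) with h5 | h5 <;>
      rcases hb (((t + k : ℕ)) : ZMod (2 ^ (2 * p))) with h6 | h6 <;>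
      · rw [show (b ((k : ℕ) : ZMod (2 ^ (2 * p)))
            - b (((t + k : ℕ)) : ZMod (2 ^ (2 * p))) : ℤ) = 0 from by omega]
        simp
  rw [hγ0, zero_mul] at hmain
  exact (Nat.cast_ne_zero (R := ℂ)).mpr (by positivity) hmain.symm

end TurynAux


/-- Turyn's theorem: if `2^m` is the dimension of a circulant Hadamard matrix,
then `m = 0` or `m = 2`. -/
theorem turyn (m : ℕ)
    (h : ∃ H : Matrix (Fin (2 ^ m)) (Fin (2 ^ m)) ℂ,
      IsCirculant H ∧ (∀ i j, H i j = 1 ∨ H i j = -1) ∧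
        H * H.transpose =
          ((2 ^ m : ℕ) : ℂ) • (1 : Matrix (Fin (2 ^ m)) (Fin (2 ^ m)) ℂ)) :
    m = 0 ∨ m = 2 := by
  classical
  obtain ⟨H, ⟨a, ha⟩, hpm, hherm⟩ := h
  haveI : NeZero (2 ^ m) := ⟨by positivity⟩
  have hnpos : 0 < 2 ^ m := by positivity
  have hμ : ∀ x : ZMod (2 ^ m), a x = 1 ∨ a x = -1 := by
    intro x
    have h1 : ((ZMod.val x : ℕ) : ZMod (2 ^ m)) = x := ZMod.natCast_rightInverse x
    have hx : H ⟨x.val, x.val_lt⟩ ⟨0, hnpos⟩ = a x := by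
      rw [ha]
      congr 1
      simp [h1]
    rw [← hx]
    exact hpm _ _
  set b : ZMod (2 ^ m) → ℤ := fun x => if a x = 1 then 1 else -1 with hbdef
  have hab : ∀ x, ((b x : ℤ) : ℂ) = a x := by
    intro x
    rcases hμ x with h' | h'
    · rw [hbdef]; simp [h']
    · rw [hbdef]; simp only [h']; norm_num
  have hb1 : ∀ x, b x = 1 ∨ b x = -1 := by
    intro x
    rw [hbdef]
    dsimp only
    split
    · exact Or.inl rfl
    · exact Or.inr rfl
  have hent : ∀ i j : Fin (2 ^ m),
      (∑ k : Fin (2 ^ m), H i k * H j k) = if i = j then ((2 ^ m : ℕ) : ℂ) else 0 := by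
    intro i j
    have hij : (H * H.transpose) i j
        = (((2 ^ m : ℕ) : ℂ) • (1 : Matrix (Fin (2 ^ m)) (Fin (2 ^ m)) ℂ)) i j := by
      rw [hherm]
    rw [Matrix.mul_apply] at hij
    simp only [Matrix.transpose_apply, Matrix.smul_apply, Matrix.one_apply, smul_eq_mul,
      mul_ite, mul_one, mul_zero] at hij
    exact hij
  have hauto : ∀ d : ZMod (2 ^ m),
      (∑ x : ZMod (2 ^ m), (b x : ℂ) * ((b (x + d) : ℤ) : ℂ)) =
        if d = 0 then ((2 ^ m : ℕ) : ℂ) else 0 := by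
    intro d
    have hd1 : ((ZMod.val d : ℕ) : ZMod (2 ^ m)) = d := ZMod.natCast_rightInverse d
    have hi := hent ⟨d.val, d.val_lt⟩ ⟨0, hnpos⟩
    have hbij : Function.Bijective (fun k : Fin (2 ^ m) => -((k : ℕ) : ZMod (2 ^ m))) :=
      Function.Bijective.comp neg_involutive.bijective TurynAux.cast_bijective
    have hL : (∑ k : Fin (2 ^ m), H ⟨d.val, d.val_lt⟩ k * H ⟨0, hnpos⟩ k)
        = ∑ x : ZMod (2 ^ m), ((b (x + d) : ℤ) : ℂ) * ((b x : ℤ) : ℂ) := by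
      refine Fintype.sum_bijective _ hbij _ _ (fun k => ?_)
      rw [ha, ha, hab, hab]
      have e2 : ((((⟨d.val, d.val_lt⟩ : Fin (2 ^ m)) : ℕ)) : ZMod (2 ^ m))
          - (((k : ℕ)) : ZMod (2 ^ m)) = -((k : ℕ) : ZMod (2 ^ m)) + d := by
        simp only [hd1]
        ring
      have e3 : ((((⟨0, hnpos⟩ : Fin (2 ^ m)) : ℕ)) : ZMod (2 ^ m))
          - (((k : ℕ)) : ZMod (2 ^ m)) = -((k : ℕ) : ZMod (2 ^ m)) := by
        simp
      rw [e2, e3]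
    have hswap : ∑ x : ZMod (2 ^ m), (b x : ℂ) * ((b (x + d) : ℤ) : ℂ)
        = ∑ x : ZMod (2 ^ m), ((b (x + d) : ℤ) : ℂ) * ((b x : ℤ) : ℂ) :=
      Finset.sum_congr rfl fun x _ => mul_comm _ _
    rw [hswap, ← hL, hi]
    by_cases hd : d = 0
    · have : d.val = 0 := (ZMod.val_eq_zero d).mpr hd
      simp [hd, this]
    · rw [if_neg, if_neg hd]
      intro hc
      apply hd
      have hv : d.val = 0 := by
        have := congrArg Fin.val hc
        simpa using this
      exact (ZMod.val_eq_zero d).mp hv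
  -- sum squared = 2^m
  have hone : ∑ d : ZMod (2 ^ m), (if d = (0 : ZMod (2 ^ m)) then ((2 ^ m : ℕ) : ℂ) else 0)
      = ((2 ^ m : ℕ) : ℂ) := by
    rw [Finset.sum_ite_eq' Finset.univ (0 : ZMod (2 ^ m)) (fun _ => ((2 ^ m : ℕ) : ℂ))]
    simp
  have hswap2 : ∑ d : ZMod (2 ^ m), ∑ x : ZMod (2 ^ m), (b x : ℂ) * ((b (x + d) : ℤ) : ℂ)
      = ∑ x : ZMod (2 ^ m), (b x : ℂ) * ∑ d : ZMod (2 ^ m), ((b (x + d) : ℤ) : ℂ) := by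
    rw [Finset.sum_comm]
    exact Finset.sum_congr rfl fun x _ => by rw [Finset.mul_sum]
  have hinner2 : ∀ x : ZMod (2 ^ m), ∑ d : ZMod (2 ^ m), ((b (x + d) : ℤ) : ℂ)
      = ∑ y : ZMod (2 ^ m), ((b y : ℤ) : ℂ) :=
    fun x => Fintype.sum_bijective (fun d : ZMod (2 ^ m) => x + d)
      (Equiv.addLeft x).bijective _ _ (fun d => rfl)
  have hcomb : ∑ d : ZMod (2 ^ m), ∑ x : ZMod (2 ^ m), (b x : ℂ) * ((b (x + d) : ℤ) : ℂ)
      = ((2 ^ m : ℕ) : ℂ) := by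
    rw [Finset.sum_congr rfl (fun d (_ : d ∈ Finset.univ) => hauto d), hone]
  rw [hswap2, Finset.sum_congr rfl (fun x (_ : x ∈ Finset.univ) => by rw [hinner2 x]),
    ← Finset.sum_mul] at hcomb
  have hsZ : (∑ x : ZMod (2 ^ m), b x) ^ 2 = (2 ^ m : ℤ) := by
    have h7 : (((∑ x : ZMod (2 ^ m), b x) ^ 2 : ℤ) : ℂ) = (((2 ^ m : ℤ)) : ℂ) := by
      push_cast
      push_cast at hcomb
      linear_combination hcomb
    exact_mod_cast h7
  have hkN : (∑ x : ZMod (2 ^ m), b x).natAbs ^ 2 = 2 ^ m := by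
    have h8 : (((∑ x : ZMod (2 ^ m), b x).natAbs : ℤ)) ^ 2 = ((2 ^ m : ℕ) : ℤ) := by
      rw [Int.natAbs_sq, hsZ]
      push_cast
      rfl
    exact_mod_cast h8
  have hk0 : (∑ x : ZMod (2 ^ m), b x).natAbs ≠ 0 := by
    intro h0
    rw [h0] at hkN
    simp at hkN
    omega
  have hfac := congrArg (fun f : ℕ →₀ ℕ => f 2) (congrArg Nat.factorization hkN)
  simp only [Nat.factorization_pow, Finsupp.smul_apply, smul_eq_mul,
    Nat.Prime.factorization_pow Nat.prime_two, Finsupp.single_eq_same] at hfac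
  obtain ⟨q, hq⟩ : ∃ q, m = 2 * q := ⟨(∑ x : ZMod (2 ^ m), b x).natAbs.factorization 2, by omega⟩
  subst hq
  rcases q with _ | _ | q
  · left; rfl
  · right; rfl
  · exfalso
    exact TurynAux.core (q + 2) (by omega)
      (Complex.isPrimitiveRoot_exp (2 ^ (2 * (q + 2))) (by positivity)) b hb1 hauto
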